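/- Let G be a finite group and f : G → ℂ a function that vanishes on all elements of even order. Then ∑_{g∈G} f(g²) = ∑_{x ∈ G, x²=1} ∑_{h ∈ C_G(x), h of odd order} f(h²). -/

import Mathlib

theorem stmt_18 (G : Type*) [Group G] [Fintype G] [DecidableEq G] (f : G → ℂ)
    (hf : ∀ g : G, Even (orderOf g) → f g = 0) :
    ∑ g : G, f (g ^ 2) =
      ∑ x ∈ Finset.univ.filter (fun x : G => x ^ 2 = 1),
        ∑ h ∈ Finset.univ.filter (fun h : G => h * x = x * h ∧ Odd (orderOf h)),
          f (h ^ 2) := by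
  classical
  have hdvd_odd : ∀ d n : ℕ, d ∣ n → Odd n → Odd d := by
    intro d n hdn hn
    rcases Nat.even_or_odd d with hd | hd
    · exfalso
      have h2 : 2 ∣ n := hd.two_dvd.trans hdn
      have h1 := Nat.odd_iff.mp hn
      omega
    · exact hd
  have hodd : ∀ h : G, Odd (orderOf h) → orderOf (h ^ 2) = orderOf h := by
    intro h hh
    rw [orderOf_pow]
    have hc : (orderOf h).gcd 2 = 1 := by
      have h2 : (orderOf h).gcd 2 ∣ 2 := Nat.gcd_dvd_right _ _
      rcases (Nat.dvd_prime Nat.prime_two).mp h2 with h' | h'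
      · exact h'
      · exfalso
        have h3 : (orderOf h).gcd 2 ∣ orderOf h := Nat.gcd_dvd_left _ _
        rw [h'] at h3
        have h1 := Nat.odd_iff.mp hh
        omega
    rw [hc, Nat.div_one]
  -- key facts about the decomposition of g when orderOf (g^2) is odd
  have hk2 : ∀ g : G, Odd (orderOf (g ^ 2)) →
      ((orderOf (g ^ 2) + 1) / 2) * 2 = orderOf (g ^ 2) + 1 := by
    intro g hg
    exact Nat.div_mul_cancel hg.add_one.two_dvd
  have hsq : ∀ g : G, Odd (orderOf (g ^ 2)) →
      ((g ^ 2) ^ ((orderOf (g ^ 2) + 1) / 2)) ^ 2 = g ^ 2 := by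
    intro g hg
    rw [← pow_mul, hk2 g hg, pow_succ, pow_orderOf_eq_one, one_mul]
  conv_rhs => rw [← Finset.sum_sigma _ _ (fun p : (_ : G) × G => f (p.2 ^ 2))]
  rw [← Finset.sum_filter_of_ne (s := Finset.univ)
      (p := fun g : G => Odd (orderOf (g ^ 2)))
      (fun g _ hne => by
        by_contra hcon
        exact hne (hf _ (Nat.not_odd_iff_even.mp hcon)))]
  refine Finset.sum_bij'
    (fun g _ => ⟨g * ((g ^ 2) ^ ((orderOf (g ^ 2) + 1) / 2))⁻¹,
      (g ^ 2) ^ ((orderOf (g ^ 2) + 1) / 2)⟩)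
    (fun p _ => p.1 * p.2) ?_ ?_ ?_ ?_ ?_
  · -- i maps into the sigma set
    intro g hg
    rw [Finset.mem_filter] at hg
    have hgo : Odd (orderOf (g ^ 2)) := hg.2
    set k := (orderOf (g ^ 2) + 1) / 2 with hk
    set h := (g ^ 2) ^ k with hhdef
    have cg : Commute g h := ((Commute.refl g).pow_right 2).pow_right k
    have hx2 : (g * h⁻¹) ^ 2 = 1 := by
      rw [(cg.inv_right).mul_pow, inv_pow, hsq g hgo, mul_inv_cancel]
    have hch : Commute h (g * h⁻¹) :=
      (cg.symm).mul_right (Commute.refl h).inv_right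
    have hho : Odd (orderOf h) := hdvd_odd _ _ (orderOf_pow_dvd k) hgo
    simp only [Finset.mem_sigma, Finset.mem_filter, Finset.mem_univ, true_and]
    exact ⟨hx2, hch.eq, hho⟩
  · -- j maps into the filter set
    rintro ⟨x, h⟩ hp
    simp only [Finset.mem_sigma, Finset.mem_filter, Finset.mem_univ, true_and] at hp
    obtain ⟨hx, hc, hh⟩ := hp
    have cxh : Commute x h := (hc : Commute h x).symm
    have hg2 : (x * h) ^ 2 = h ^ 2 := by rw [cxh.mul_pow, hx, one_mul]
    rw [Finset.mem_filter]
    exact ⟨Finset.mem_univ _, by rw [hg2, hodd h hh]; exact hh⟩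
  · -- left inverse
    intro g hg
    exact inv_mul_cancel_right g _
  · -- right inverse
    rintro ⟨x, h⟩ hp
    simp only [Finset.mem_sigma, Finset.mem_filter, Finset.mem_univ, true_and] at hp
    obtain ⟨hx, hc, hh⟩ := hp
    have cxh : Commute x h := (hc : Commute h x).symm
    have hg2 : (x * h) ^ 2 = h ^ 2 := by rw [cxh.mul_pow, hx, one_mul]
    have hn : orderOf ((x * h) ^ 2) = orderOf h := by rw [hg2, hodd h hh]
    have hcomp2 : ((x * h) ^ 2) ^ ((orderOf ((x * h) ^ 2) + 1) / 2) = h := by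
      rw [hg2, hodd h hh, ← pow_mul]
      have : ((orderOf h + 1) / 2) * 2 = orderOf h + 1 := Nat.div_mul_cancel hh.add_one.two_dvd
      rw [mul_comm 2, this, pow_succ, pow_orderOf_eq_one, one_mul]
    refine Sigma.ext ?_ ?_
    · simp only [hcomp2, mul_inv_cancel_right]
    · simp only [hcomp2]
      exact HEq.rfl
  · -- values agree
    intro g hg
    rw [Finset.mem_filter] at hg
    rw [hsq g hg.2]
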